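/- arXiv:1202.4120 — 2 statements merged into one kernel-verified Lean document; each statement's English description precedes it below -/
import Mathlib

section
/- Let B = [[u, B'],[c, w*]] ∈ U(n). Then B' is a normal matrix if and only if the vectors u and w are proportional with a constant of proportionality of modulus 1 (or both zero). -/
open Matrix

/-- The block matrix `B = [[u, B'],[c, w*]]` acting on `ℂⁿ = ℂ ⊕ ℂ^{n-1}`:
first column `(u; c)`, upper-right corner `B'`, bottom row `(c, w*)`. -/
noncomputable def blockB {m : ℕ} (u : Fin m → ℂ) (B' : Matrix (Fin m) (Fin m) ℂ)
    (c : ℂ) (w : Fin m → ℂ) : Matrix (Fin (m + 1)) (Fin (m + 1)) ℂ :=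
  fun i j =>
    Fin.cases (Fin.lastCases c u i)
      (fun j' => Fin.lastCases ((starRingEnd ℂ) (w j')) (fun i' => B' i' j') i) j

lemma key_prop {m : ℕ} (u w : Fin m → ℂ)
    (h : ∀ a b, w a * (starRingEnd ℂ) (w b) = u a * (starRingEnd ℂ) (u b)) :
    ∃ t : ℂ, ‖t‖ = 1 ∧ w = t • u := by
  by_cases hu : u = 0
  · have hw : w = 0 := by
      funext a
      have := h a a
      simp [hu, Complex.mul_conj] at this
      simpa using this
    exact ⟨1, by simp, by simp [hu, hw]⟩
  · obtain ⟨a, ha⟩ : ∃ a, u a ≠ 0 := by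
      contrapose! hu; funext i; exact hu i
    have habs : ‖w a‖ = ‖u a‖ := by
      have := h a a
      rw [Complex.mul_conj, Complex.mul_conj] at this
      have h2 : Complex.normSq (w a) = Complex.normSq (u a) := by exact_mod_cast this
      rw [Complex.norm_def, Complex.norm_def, h2]
    have hwa : w a ≠ 0 := by
      intro h0
      apply ha
      rw [← norm_eq_zero] at h0 ⊢
      rw [← habs]; exact h0
    refine ⟨w a / u a, ?_, ?_⟩
    · rw [norm_div, habs, div_self]
      simpa using ha
    · funext b
      have h1 := h b a
      have h2 := h a a
      have hc : (starRingEnd ℂ) (w a) ≠ 0 := by simpa using hwa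
      show w b = (w a / u a) * u b
      rw [div_mul_eq_mul_div, eq_div_iff ha]
      apply mul_left_cancel₀ hc
      linear_combination u a * h1 - u b * h2

/-- For `B = [[u, B'],[c, w*]] ∈ U(n)`: `B'` is normal iff `u` and `w` are proportional
with a constant of proportionality of modulus one (or both zero). -/
theorem stmt_8 {m : ℕ} (u w : Fin m → ℂ) (B' : Matrix (Fin m) (Fin m) ℂ) (c : ℂ)
    (hB : blockB u B' c w ∈ Matrix.unitaryGroup (Fin (m + 1)) ℂ) :
    B'ᴴ * B' = B' * B'ᴴ ↔ ∃ t : ℂ, ‖t‖ = 1 ∧ w = t • u := by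
  set A := blockB u B' c w with hA
  have h1 : star A * A = 1 := hB.1
  have h2 : A * star A = 1 := hB.2
  have hL : ∀ a b, (B'ᴴ * B') a b + w a * (starRingEnd ℂ) (w b)
      = (if a = b then (1:ℂ) else 0) := by
    intro a b
    have hthis := congrFun (congrFun h1 a.succ) b.succ
    rw [Matrix.mul_apply, Fin.sum_univ_castSucc] at hthis
    simp only [Matrix.star_apply, hA, blockB, Fin.cases_succ, Fin.lastCases_castSucc,
      Fin.lastCases_last, Matrix.one_apply, Fin.succ_inj, Complex.star_def,
      Complex.conj_conj] at hthis
    rw [Matrix.mul_apply]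
    simp only [Matrix.conjTranspose_apply, Complex.star_def]
    linear_combination hthis
  have hR : ∀ a b, (B' * B'ᴴ) a b + u a * (starRingEnd ℂ) (u b)
      = (if a = b then (1:ℂ) else 0) := by
    intro a b
    have hthis := congrFun (congrFun h2 a.castSucc) b.castSucc
    rw [Matrix.mul_apply, Fin.sum_univ_succ] at hthis
    simp only [Matrix.star_apply, hA, blockB, Fin.cases_succ, Fin.cases_zero,
      Fin.lastCases_castSucc, Matrix.one_apply, Fin.castSucc_inj,
      Complex.star_def] at hthis
    rw [Matrix.mul_apply]
    simp only [Matrix.conjTranspose_apply, Complex.star_def]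
    linear_combination hthis
  constructor
  · intro hnorm
    apply key_prop
    intro a b
    have hl := hL a b
    have hr := hR a b
    have heq : (B'ᴴ * B') a b = (B' * B'ᴴ) a b := by rw [hnorm]
    linear_combination hl - hr - heq
  · rintro ⟨t, ht, rfl⟩
    have htt : t * (starRingEnd ℂ) t = 1 := by
      rw [Complex.mul_conj]
      norm_cast
      rw [Complex.normSq_eq_norm_sq, ht]; norm_num
    ext a b
    have hl := hL a b
    have hr := hR a b
    have hw : (t • u) a * (starRingEnd ℂ) ((t • u) b) = u a * (starRingEnd ℂ) (u b) := by
      simp only [Pi.smul_apply, smul_eq_mul, _root_.map_mul]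
      linear_combination (u a * (starRingEnd ℂ) (u b)) * htt
    rw [hw] at hl
    linear_combination hl - hr
end

section
/- Let B = [[u, B'],[c, w*]] ∈ U(n) and suppose ζ ∈ ℂ^{n−1} satisfies B'ζ = ζ. Then, regarding B as acting on ℂⁿ = ℂ ⊕ ℂ^{n−1}, we have ⟨u, ζ⟩ = 0 and ⟨w, ζ⟩ = 0. -/
open Matrix

/-- For `B = [[u, B'],[c, w*]] ∈ U(n)`: if `B'ζ = ζ` then `⟨u, ζ⟩ = 0` and `⟨w, ζ⟩ = 0`. -/
theorem stmt_9 {m : ℕ} (u w : Fin m → ℂ) (B' : Matrix (Fin m) (Fin m) ℂ) (c : ℂ)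
    (hB : blockB u B' c w ∈ Matrix.unitaryGroup (Fin (m + 1)) ℂ)
    (ζ : Fin m → ℂ) (hζ : B' *ᵥ ζ = ζ) :
    star u ⬝ᵥ ζ = 0 ∧ star w ⬝ᵥ ζ = 0 := by
  set B : Matrix (Fin (m + 1)) (Fin (m + 1)) ℂ := blockB u B' c w with hBdef
  have h1 : star B * B = 1 := hB.1
  set s : ℂ := star w ⬝ᵥ ζ with hs
  set ξ : Fin (m + 1) → ℂ := Fin.cases 0 ζ with hξ
  -- compute B *ᵥ ξ
  have hη : B *ᵥ ξ = Fin.lastCases s ζ := by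
    funext i
    induction i using Fin.lastCases with
    | last =>
      simp only [mulVec, dotProduct, Fin.sum_univ_succ, hξ, Fin.cases_zero, Fin.cases_succ,
        mul_zero, zero_add, Fin.lastCases_last, hBdef, blockB, hs, dotProduct, Pi.star_apply,
        RCLike.star_def]
    | cast i' =>
      simp only [mulVec, dotProduct, Fin.sum_univ_succ, hξ, Fin.cases_zero, Fin.cases_succ,
        mul_zero, zero_add, Fin.lastCases_castSucc, hBdef, blockB]
      calc ∑ j, B' i' j * ζ j = (B' *ᵥ ζ) i' := rfl
        _ = ζ i' := by rw [hζ]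
  -- norm preservation
  have hnorm : star (B *ᵥ ξ) ⬝ᵥ (B *ᵥ ξ) = star ξ ⬝ᵥ ξ := by
    rw [star_mulVec, dotProduct_mulVec, vecMul_vecMul]
    have : star ξ ᵥ* (Bᴴ * B) = star ξ := by
      rw [show Bᴴ = star B from rfl, h1, vecMul_one]
    rw [this]
  have hs0 : s = 0 := by
    rw [hη] at hnorm
    have hL : star (Fin.lastCases s ζ : Fin (m+1) → ℂ) ⬝ᵥ Fin.lastCases s ζ
        = star ζ ⬝ᵥ ζ + star s * s := by
      simp [dotProduct, Fin.sum_univ_castSucc]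
    have hR : star ξ ⬝ᵥ ξ = star ζ ⬝ᵥ ζ := by
      simp [hξ, dotProduct, Fin.sum_univ_succ]
    rw [hL, hR] at hnorm
    have : star s * s = 0 := by linear_combination hnorm
    rcases mul_eq_zero.mp this with h | h
    · exact star_eq_zero.mp h
    · exact h
  refine ⟨?_, hs0⟩
  -- recover ξ from B *ᵥ ξ and look at coordinate 0
  have hrec : (star B) *ᵥ (B *ᵥ ξ) = ξ := by
    rw [mulVec_mulVec, h1, one_mulVec]
  have h0 := congrFun hrec 0
  rw [hη] at h0
  have : ∑ i, star (B i 0) * (Fin.lastCases s ζ : Fin (m+1) → ℂ) i = 0 := by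
    simpa [mulVec, dotProduct, hξ, Matrix.star_apply] using h0
  rw [Fin.sum_univ_castSucc] at this
  simp only [Fin.lastCases_castSucc, Fin.lastCases_last, hs0, mul_zero, add_zero] at this
  rw [← this]
  congr 1
  ext i'
  simp [hBdef, blockB]
end
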